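/- ℓ1 closeness of normalized private counts (Lemma B.3): Let ι be a finite type with S ≥ 1 elements, E > 0, and let ñ, n : ι → ℝ be nonnegative with |ñ(i) − n(i)| ≤ E for all i. Write Ñ := Σ_i ñ(i) and N := Σ_i n(i), and assume |Ñ − N| ≤ E and Ñ ≥ 3E. Then the normalized distributions p̃(i) := ñ(i)/Ñ and p̂(i) := n(i)/N are well defined (N ≥ 2E > 0) and satisfy Σ_i |p̃(i) − p̂(i)| ≤ 5·S·E/Ñ. -/

import Mathlib

open Finset

/-- ℓ1 closeness of normalized private counts (Lemma B.3). -/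
theorem l1_closeness_normalized_counts
    {ι : Type*} [Fintype ι] (hS : 1 ≤ Fintype.card ι)
    (E : ℝ) (hE : 0 < E)
    (ntil n : ι → ℝ)
    (hntilnn : ∀ i, 0 ≤ ntil i) (hnnn : ∀ i, 0 ≤ n i)
    (hclose : ∀ i, |ntil i - n i| ≤ E)
    (hsumclose : |(∑ i, ntil i) - ∑ i, n i| ≤ E)
    (hNtil : 3 * E ≤ ∑ i, ntil i) :
    2 * E ≤ ∑ i, n i ∧
      ∑ i, |ntil i / (∑ j, ntil j) - n i / (∑ j, n j)| ≤
        5 * (Fintype.card ι : ℝ) * E / (∑ i, ntil i) := by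
  set Nt := ∑ i, ntil i with hNtdef
  set N := ∑ i, n i with hNdef
  have habs := abs_le.mp hsumclose
  have hNtpos : 0 < Nt := by linarith
  have hN2 : 2 * E ≤ N := by linarith [habs.1]
  have hNpos : 0 < N := by linarith
  refine ⟨hN2, ?_⟩
  have hterm : ∀ i, |ntil i / Nt - n i / N| ≤ E / Nt + n i * E / (Nt * N) := by
    intro i
    rw [div_sub_div _ _ hNtpos.ne' hNpos.ne', abs_div,
      abs_of_pos (mul_pos hNtpos hNpos)]
    have hnum : |ntil i * N - Nt * n i| ≤ N * E + n i * E := by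
      have heq : ntil i * N - Nt * n i = N * (ntil i - n i) + n i * (N - Nt) := by
        ring
      rw [heq]
      calc |N * (ntil i - n i) + n i * (N - Nt)|
          ≤ |N * (ntil i - n i)| + |n i * (N - Nt)| := abs_add_le _ _
        _ ≤ N * E + n i * E := by
            rw [abs_mul, abs_mul, abs_of_pos hNpos, abs_of_nonneg (hnnn i)]
            have h1 : |N - Nt| ≤ E := by rw [abs_sub_comm]; exact hsumclose
            gcongr
            · exact hclose i
            · exact hnnn i
    calc |ntil i * N - Nt * n i| / (Nt * N)
        ≤ (N * E + n i * E) / (Nt * N) := by gcongr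
      _ = E / Nt + n i * E / (Nt * N) := by field_simp
  calc ∑ i, |ntil i / Nt - n i / N|
      ≤ ∑ i, (E / Nt + n i * E / (Nt * N)) := Finset.sum_le_sum fun i _ => hterm i
    _ = (Fintype.card ι : ℝ) * (E / Nt) + N * E / (Nt * N) := by
        rw [Finset.sum_add_distrib, Finset.sum_const, Finset.card_univ,
          nsmul_eq_mul]
        congr 1
        rw [← Finset.sum_div, ← Finset.sum_mul]
    _ = (Fintype.card ι : ℝ) * (E / Nt) + E / Nt := by
        congr 1
        field_simp
    _ ≤ 5 * (Fintype.card ι : ℝ) * E / Nt := by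
        have hS1 : (1 : ℝ) ≤ (Fintype.card ι : ℝ) := by exact_mod_cast hS
        have hEN : 0 < E / Nt := div_pos hE hNtpos
        rw [mul_div_assoc]
        nlinarith [hEN, hS1]
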